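/- Let h ∈ L²(ℝ) satisfy h(x) = 0 for almost every x ∉ [a,b], where a ≤ 0 < b are integers. Let j, m ∈ ℕ be such that 0 ≤ a + m and b + m ≤ 2^j (so that the support of h_{j,m}(x) := 2^{j/2} h(2^j x − m) is contained in [0,1]). Then for every n ∈ ℕ: ∫₀¹ h_{j,m}(x) w_n(x) dx = 2^{−j/2} Σ_{l=a}^{b−1} w_n((l+m)/2^j) · ∫₀¹ h(x+l) w_{⌊n/2^j⌋}(x) dx. -/

import Mathlib

open MeasureTheory

/-- `natDigit n i` is the `i`-th binary digit `n^(i)` (for `i ≥ 1`) of `n ∈ ℕ`,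
so that `n = Σ_{i ≥ 1} n^(i) 2^(i-1)`. -/
def natDigit (n i : ℕ) : ℕ := (n / 2 ^ (i - 1)) % 2

/-- `dyadicDigit x i` is the `i`-th dyadic digit `x^(i) = ⌊2^i x⌋ − 2⌊2^(i−1) x⌋`
(for `i ≥ 1`) of `x ∈ [0,1)`. -/
noncomputable def dyadicDigit (x : ℝ) (i : ℕ) : ℤ :=
  ⌊(2 : ℝ) ^ i * x⌋ - 2 * ⌊(2 : ℝ) ^ (i - 1) * x⌋

/-- The sequency-ordered Walsh function
`w_n(x) = (−1)^{Σ_{i≥1} (n^(i) + n^(i+1)) x^(i)}`; the sum is finite since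
`n^(i) = 0` for `i > n`, so it may be truncated at `i = n + 1`. -/
noncomputable def walsh (n : ℕ) (x : ℝ) : ℝ :=
  (-1 : ℝ) ^ ∑ i ∈ Finset.Icc 1 (n + 1),
    (natDigit n i + natDigit n (i + 1)) * (dyadicDigit x i).toNat

/-- The dyadic XOR `x ⊕ y := Σ_{i≥1} |x^(i) − y^(i)| 2^{−i}` of `x, y ∈ [0,1)`. -/
noncomputable def dyadicXor (x y : ℝ) : ℝ :=
  ∑' i : ℕ, |(dyadicDigit x (i + 1) : ℝ) - (dyadicDigit y (i + 1) : ℝ)| / 2 ^ (i + 1)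

lemma natDigit_high {n i : ℕ} (h : n + 1 ≤ i) : natDigit n i = 0 := by
  have : n < 2 ^ (i - 1) :=
    lt_of_lt_of_le (Nat.lt_two_pow_self (n := n)) (Nat.pow_le_pow_right (by norm_num) (by omega))
  simp [natDigit, Nat.div_eq_of_lt this]

lemma natDigit_div_pow (n j s : ℕ) (hs : 1 ≤ s) :
    natDigit (n / 2 ^ j) s = natDigit n (j + s) := by
  unfold natDigit
  rw [Nat.div_div_eq_div_mul, ← pow_add]
  have : j + (s - 1) = j + s - 1 := by omega
  rw [this]

lemma floor_aux (s k : ℕ) {t : ℝ} (ht0 : 0 ≤ t) (ht1 : t < 1) :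
    ⌊(t + (k : ℝ)) / 2 ^ s⌋ = (k / 2 ^ s : ℕ) := by
  have h2 : (0:ℝ) < 2 ^ s := by positivity
  have hdm : (k : ℝ) = 2 ^ s * ((k / 2 ^ s : ℕ) : ℝ) + ((k % 2 ^ s : ℕ) : ℝ) := by
    exact_mod_cast (Nat.div_add_mod k (2 ^ s)).symm
  have hml : ((k % 2 ^ s : ℕ) : ℝ) < 2 ^ s := by
    exact_mod_cast Nat.mod_lt k (show 0 < 2 ^ s by positivity)
  rw [Int.floor_eq_iff]
  simp only [Int.cast_natCast]
  constructor
  · rw [le_div_iff₀ h2]; nlinarith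
  · rw [div_lt_iff₀ h2]
    have hml' : ((k % 2 ^ s : ℕ) : ℝ) + 1 ≤ 2 ^ s := by
      exact_mod_cast Nat.mod_lt k (show 0 < 2 ^ s by positivity)
    nlinarith

lemma dyadicDigit_low {j i : ℕ} (k : ℕ) (hi : 1 ≤ i) (hij : i ≤ j) {t : ℝ}
    (ht0 : 0 ≤ t) (ht1 : t < 1) :
    dyadicDigit ((t + (k : ℝ)) / 2 ^ j) i = ((k / 2 ^ (j - i)) % 2 : ℕ) := by
  have e1 : (2:ℝ) ^ i * ((t + (k:ℝ)) / 2 ^ j) = (t + (k:ℝ)) / 2 ^ (j - i) := by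
    have : (2:ℝ) ^ j = 2 ^ (j - i) * 2 ^ i := by rw [← pow_add]; congr 1; omega
    rw [this]; field_simp
  have e2 : (2:ℝ) ^ (i - 1) * ((t + (k:ℝ)) / 2 ^ j) = (t + (k:ℝ)) / 2 ^ (j - i + 1) := by
    have : (2:ℝ) ^ j = 2 ^ (j - i + 1) * 2 ^ (i - 1) := by rw [← pow_add]; congr 1; omega
    rw [this]; field_simp
  unfold dyadicDigit
  rw [e1, e2, floor_aux _ _ ht0 ht1, floor_aux _ _ ht0 ht1]
  have hd : k / 2 ^ (j - i + 1) = (k / 2 ^ (j - i)) / 2 := by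
    rw [Nat.div_div_eq_div_mul, ← pow_succ]
  rw [hd]
  have := Nat.div_add_mod (k / 2 ^ (j - i)) 2
  have h2 := Nat.mod_lt (k / 2 ^ (j - i)) (show 0 < 2 by norm_num)
  omega

lemma dyadicDigit_high {j i : ℕ} (k : ℕ) (hij : j < i) (t : ℝ) :
    dyadicDigit ((t + (k : ℝ)) / 2 ^ j) i = dyadicDigit t (i - j) := by
  have key : ∀ e : ℕ, (2:ℝ) ^ (e + j) * ((t + (k:ℝ)) / 2 ^ j)
      = 2 ^ e * t + ((2 ^ e * k : ℕ) : ℝ) := by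
    intro e
    have h2 : (2:ℝ) ^ j ≠ 0 := by positivity
    push_cast
    rw [pow_add]; field_simp
  have hi1 : i = (i - j - 1) + 1 + j := by omega
  have hi2 : i - 1 = (i - j - 1) + j := by omega
  unfold dyadicDigit
  rw [show (2:ℝ) ^ i = 2 ^ ((i - j - 1) + 1 + j) by rw [← hi1],
      show (2:ℝ) ^ (i - 1) = 2 ^ ((i - j - 1) + j) by rw [← hi2],
      key, key, Int.floor_add_natCast, Int.floor_add_natCast]
  have h3 : i - j = (i - j - 1) + 1 := by omega
  have h4 : i - j - 1 = (i - j) - 1 := by omega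
  rw [h3]
  push_cast [pow_succ]
  ring

lemma dyadicDigit_zero (s : ℕ) : dyadicDigit 0 s = 0 := by
  simp [dyadicDigit]

lemma walsh_eq_sum (n : ℕ) (x : ℝ) {N : ℕ} (hN : n + 1 ≤ N) :
    walsh n x = (-1 : ℝ) ^ ∑ i ∈ Finset.Icc 1 N,
      (natDigit n i + natDigit n (i + 1)) * (dyadicDigit x i).toNat := by
  unfold walsh
  congr 1
  apply Finset.sum_subset (Finset.Icc_subset_Icc_right hN)
  intro i hi hni
  simp only [Finset.mem_Icc] at hi hni
  rw [natDigit_high (by omega), natDigit_high (by omega)]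
  simp

lemma walsh_split (n j k : ℕ) (hk : k < 2 ^ j) {t : ℝ} (ht0 : 0 ≤ t) (ht1 : t < 1) :
    walsh n ((t + (k : ℝ)) / 2 ^ j) = walsh n ((k : ℝ) / 2 ^ j) * walsh (n / 2 ^ j) t := by
  have hn' : n / 2 ^ j ≤ n := Nat.div_le_self n _
  set N := n + j + 2 with hNdef
  rw [walsh_eq_sum n ((t + (k:ℝ)) / 2 ^ j) (N := N) (by omega),
      walsh_eq_sum n ((k:ℝ) / 2 ^ j) (N := N) (by omega),
      walsh_eq_sum (n / 2 ^ j) t (N := N - j) (by omega)]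
  rw [← pow_add]
  congr 1
  have hIcc : ∀ M : ℕ, Finset.Icc 1 M = Finset.Ioc 0 M := by
    intro M; ext i; simp [Nat.lt_iff_add_one_le]
  simp only [hIcc]
  have hsplit : ∀ f : ℕ → ℕ, (∑ i ∈ Finset.Ioc 0 j, f i) + (∑ i ∈ Finset.Ioc j N, f i)
      = ∑ i ∈ Finset.Ioc 0 N, f i := fun f =>
    Finset.sum_Ioc_consecutive f (Nat.zero_le j) (by omega)
  rw [← hsplit, ← hsplit]
  have hA : ∑ i ∈ Finset.Ioc 0 j,
        (natDigit n i + natDigit n (i + 1)) * (dyadicDigit ((t + (k:ℝ)) / 2 ^ j) i).toNat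
      = ∑ i ∈ Finset.Ioc 0 j,
        (natDigit n i + natDigit n (i + 1)) * (dyadicDigit ((k:ℝ) / 2 ^ j) i).toNat := by
    apply Finset.sum_congr rfl
    intro i hi
    simp only [Finset.mem_Ioc] at hi
    rw [dyadicDigit_low k (by omega) hi.2 ht0 ht1,
        show (k:ℝ) / 2 ^ j = (0 + (k:ℝ)) / 2 ^ j by rw [zero_add],
        dyadicDigit_low k (by omega) hi.2 le_rfl one_pos]
  have hA2 : ∑ i ∈ Finset.Ioc j N,
        (natDigit n i + natDigit n (i + 1)) * (dyadicDigit ((k:ℝ) / 2 ^ j) i).toNat = 0 := by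
    apply Finset.sum_eq_zero
    intro i hi
    simp only [Finset.mem_Ioc] at hi
    rw [show (k:ℝ) / 2 ^ j = (0 + (k:ℝ)) / 2 ^ j by rw [zero_add],
        dyadicDigit_high k hi.1, dyadicDigit_zero]
    simp
  have hB : ∑ i ∈ Finset.Ioc j N,
        (natDigit n i + natDigit n (i + 1)) * (dyadicDigit ((t + (k:ℝ)) / 2 ^ j) i).toNat
      = ∑ s ∈ Finset.Ioc 0 (N - j),
        (natDigit (n / 2 ^ j) s + natDigit (n / 2 ^ j) (s + 1)) * (dyadicDigit t s).toNat := by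
    rw [show Finset.Ioc j N = Finset.Ioc (j + 0) (j + (N - j)) by congr 1; omega]
    rw [← Finset.map_add_left_Ioc, Finset.sum_map]
    apply Finset.sum_congr rfl
    intro s hs
    simp only [Finset.mem_Ioc] at hs
    simp only [addLeftEmbedding_apply]
    rw [dyadicDigit_high k (by omega),
        natDigit_div_pow n j s (by omega), natDigit_div_pow n j (s + 1) (by omega),
        show j + s - j = s by omega, show j + s + 1 = j + (s + 1) by omega]
  rw [hA, hA2, hB]
  omega

lemma measurable_walsh (n : ℕ) : Measurable (walsh n) := by
  unfold walsh
  have hF : Measurable fun x : ℝ => ∑ i ∈ Finset.Icc 1 (n + 1),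
      (natDigit n i + natDigit n (i + 1)) * (dyadicDigit x i).toNat := by
    apply Finset.measurable_sum
    intro i _
    apply Measurable.mul measurable_const
    have hd : Measurable fun x : ℝ => dyadicDigit x i := by
      unfold dyadicDigit
      exact ((measurable_id.const_mul _).floor).sub
        (((measurable_id.const_mul _).floor).const_mul _)
    exact (measurable_from_top (f := Int.toNat)).comp hd
  exact (measurable_from_top (f := fun k : ℕ => (-1 : ℝ) ^ k)).comp hF

lemma abs_walsh (n : ℕ) (x : ℝ) : |walsh n x| = 1 := by
  unfold walsh
  rw [abs_pow, abs_neg, abs_one, one_pow]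

/-- For `h ∈ L²(ℝ)` supported in `[a,b]` (integers `a ≤ 0 < b`) and
`j, m ∈ ℕ` with `0 ≤ a + m` and `b + m ≤ 2^j`, one has for every `n ∈ ℕ`:
`∫₀¹ h_{j,m}(x) w_n(x) dx
  = 2^{−j/2} Σ_{l=a}^{b−1} w_n((l+m)/2^j) ∫₀¹ h(x+l) w_{⌊n/2^j⌋}(x) dx`,
where `h_{j,m}(x) = 2^{j/2} h(2^j x − m)`. -/
theorem walsh_wavelet_inner (a b : ℤ) (ha : a ≤ 0) (hb : 0 < b) (h : ℝ → ℝ)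
    (hL2 : MemLp h 2 volume)
    (hsupp : ∀ᵐ x : ℝ, x ∉ Set.Icc (a : ℝ) (b : ℝ) → h x = 0)
    (j m : ℕ) (h1 : 0 ≤ a + (m : ℤ)) (h2 : b + (m : ℤ) ≤ 2 ^ j) (n : ℕ) :
    ∫ x in (0 : ℝ)..1, ((2 : ℝ) ^ ((j : ℝ) / 2) * h (2 ^ j * x - m)) * walsh n x =
      (2 : ℝ) ^ (-(j : ℝ) / 2) * ∑ l ∈ Finset.Icc a (b - 1),
        walsh n (((l : ℝ) + m) / 2 ^ j) *
          ∫ x in (0 : ℝ)..1, h (x + l) * walsh (n / 2 ^ j) x := by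
  have h2jR : (0:ℝ) < 2 ^ j := by positivity
  set g : ℝ → ℝ := fun u => h u * walsh n ((u + m) / 2 ^ j) with hgdef
  have hwm : Measurable fun u : ℝ => walsh n ((u + m) / 2 ^ j) :=
    (measurable_walsh n).comp ((measurable_id.add_const _).div_const _)
  -- interval integrability of g
  have hgi : ∀ c d : ℝ, IntervalIntegrable g volume c d := by
    intro c d
    rw [intervalIntegrable_iff]
    have hfin : IsFiniteMeasure (volume.restrict (Set.uIoc c d)) := by
      constructor
      rw [Measure.restrict_apply_univ]
      exact measure_Ioc_lt_top
    have hInt : IntegrableOn h (Set.uIoc c d) volume :=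
      (hL2.restrict _).integrable one_le_two
    have := Integrable.bdd_mul (f := fun u : ℝ => walsh n ((u + m) / 2 ^ j)) hInt
      (hwm.aestronglyMeasurable.restrict)
      (c := 1) (Filter.Eventually.of_forall fun x => by rw [Real.norm_eq_abs, abs_walsh])
    exact this.congr (Filter.Eventually.of_forall fun u => mul_comm _ _)
  -- Step A: change of variables
  have hA : (∫ x in (0:ℝ)..1, ((2:ℝ) ^ ((j:ℝ)/2) * h (2 ^ j * x - m)) * walsh n x)
      = (2:ℝ) ^ ((j:ℝ)/2) * (((2:ℝ) ^ j)⁻¹ • ∫ u in (-(m:ℝ))..((2:ℝ) ^ j - m), g u) := by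
    have e : ∀ x : ℝ, ((2:ℝ) ^ ((j:ℝ)/2) * h (2 ^ j * x - m)) * walsh n x
        = (2:ℝ) ^ ((j:ℝ)/2) * g (2 ^ j * x - m) := by
      intro x
      have hx : ((2:ℝ) ^ j * x - m + m) / 2 ^ j = x := by field_simp; ring
      simp only [hgdef]
      rw [hx]; ring
    simp only [e]
    rw [intervalIntegral.integral_const_mul,
      intervalIntegral.integral_comp_mul_sub g (ne_of_gt h2jR) (m:ℝ)]
    norm_num
  -- Step B: restrict to [a,b]
  have hmaR : -(m:ℝ) ≤ (a:ℝ) := by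
    have : -(m:ℤ) ≤ a := by omega
    exact_mod_cast this
  have habR : (a:ℝ) ≤ (b:ℝ) := by
    have : a ≤ b := by omega
    exact_mod_cast this
  have hbmR : (b:ℝ) ≤ (2:ℝ) ^ j - m := by
    have hz : (b:ℤ) + m ≤ 2 ^ j := h2
    have : (b:ℝ) + m ≤ (2:ℝ) ^ j := by exact_mod_cast hz
    linarith
  have hne_a : ∀ᵐ u : ℝ, u ≠ (a:ℝ) := by
    rw [ae_iff]
    simp only [ne_eq, not_not, Set.setOf_eq_eq_singleton]
    exact measure_singleton _
  have hzero1 : (∫ u in (-(m:ℝ))..(a:ℝ), g u) = 0 := by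
    have : (∫ u in (-(m:ℝ))..(a:ℝ), g u) = ∫ u in (-(m:ℝ))..(a:ℝ), (0:ℝ) := by
      apply intervalIntegral.integral_congr_ae
      filter_upwards [hsupp, hne_a] with u hu hua hmem
      rw [Set.uIoc_of_le hmaR] at hmem
      have hlt : u < (a:ℝ) := lt_of_le_of_ne hmem.2 hua
      have h0 : h u = 0 := hu (fun hc => absurd hc.1 (not_le.mpr hlt))
      simp only [hgdef, h0, zero_mul]
    simpa using this
  have hzero2 : (∫ u in (b:ℝ)..((2:ℝ) ^ j - m), g u) = 0 := by
    have : (∫ u in (b:ℝ)..((2:ℝ) ^ j - m), g u) = ∫ u in (b:ℝ)..((2:ℝ) ^ j - m), (0:ℝ) := by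
      apply intervalIntegral.integral_congr_ae
      filter_upwards [hsupp] with u hu hmem
      rw [Set.uIoc_of_le hbmR] at hmem
      have h0 : h u = 0 := hu (fun hc => absurd hc.2 (not_le.mpr hmem.1))
      simp only [hgdef, h0, zero_mul]
    simpa using this
  have hsplit1 : (∫ u in (-(m:ℝ))..((2:ℝ) ^ j - m), g u) = ∫ u in (a:ℝ)..(b:ℝ), g u := by
    rw [← intervalIntegral.integral_add_adjacent_intervals (hgi (-(m:ℝ)) (a:ℝ))
        (hgi (a:ℝ) ((2:ℝ) ^ j - m)),
      ← intervalIntegral.integral_add_adjacent_intervals (hgi (a:ℝ) (b:ℝ))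
        (hgi (b:ℝ) ((2:ℝ) ^ j - m)),
      hzero1, hzero2]
    ring
  -- Step C: split into unit intervals
  have hsum := intervalIntegral.sum_integral_adjacent_intervals (μ := volume) (f := g)
    (a := fun k : ℕ => (a:ℝ) + k) (n := (b - a).toNat) (fun k _ => hgi _ _)
  have ha0 : (a:ℝ) + ((0:ℕ):ℝ) = (a:ℝ) := by norm_num
  have haM : (a:ℝ) + (((b - a).toNat : ℕ) : ℝ) = (b:ℝ) := by
    have : ((b - a).toNat : ℤ) = b - a := Int.toNat_of_nonneg (by omega)
    have h' : (((b - a).toNat : ℤ) : ℝ) = ((b : ℤ) : ℝ) - ((a : ℤ) : ℝ) := by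
      rw [this]; push_cast; ring
    push_cast at h' ⊢
    linarith
  beta_reduce at hsum
  rw [ha0, haM] at hsum
  push_cast at hsum
  -- per-interval computation
  have hper : ∀ l : ℤ, a ≤ l → l ≤ b - 1 →
      (∫ u in (l:ℝ)..((l:ℝ)+1), g u)
        = walsh n (((l:ℝ) + m) / 2 ^ j) *
            ∫ x in (0:ℝ)..1, h (x + l) * walsh (n / 2 ^ j) x := by
    intro l hla hlb
    have hk0 : (0:ℤ) ≤ l + m := by omega
    have hklt : l + (m:ℤ) < 2 ^ j := by
      have hz : (b:ℤ) + m ≤ 2 ^ j := h2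
      omega
    set k : ℕ := (l + m).toNat with hkdef
    have hkZ : ((k:ℕ):ℤ) = l + m := Int.toNat_of_nonneg hk0
    have hkR : ((k:ℕ):ℝ) = (l:ℝ) + m := by
      have : (((k:ℕ):ℤ):ℝ) = ((l + (m:ℤ) : ℤ) : ℝ) := by rw [hkZ]
      push_cast at this
      linarith
    have hk2 : k < 2 ^ j := by
      have : ((k:ℕ):ℤ) < 2 ^ j := by rw [hkZ]; exact hklt
      exact_mod_cast this
    have hsub : (∫ u in (l:ℝ)..((l:ℝ)+1), g u) = ∫ x in (0:ℝ)..1, g (x + l) := by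
      rw [intervalIntegral.integral_comp_add_right g (l:ℝ)]
      norm_num [add_comm]
    rw [hsub]
    have hne1 : ∀ᵐ x : ℝ, x ≠ (1:ℝ) := by
      rw [ae_iff]
      simp only [ne_eq, not_not, Set.setOf_eq_eq_singleton]
      exact measure_singleton _
    have hcong : (∫ x in (0:ℝ)..1, g (x + l))
        = ∫ x in (0:ℝ)..1, walsh n (((l:ℝ) + m) / 2 ^ j) * (h (x + l) * walsh (n / 2 ^ j) x) := by
      apply intervalIntegral.integral_congr_ae
      filter_upwards [hne1] with x hx1 hmem
      rw [Set.uIoc_of_le (by norm_num : (0:ℝ) ≤ 1)] at hmem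
      have hx0 : (0:ℝ) ≤ x := le_of_lt hmem.1
      have hxlt : x < 1 := lt_of_le_of_ne hmem.2 hx1
      simp only [hgdef]
      have harg : (x + (l:ℝ) + m) / 2 ^ j = (x + ((k:ℕ):ℝ)) / 2 ^ j := by rw [hkR]; ring_nf
      rw [harg, walsh_split n j k hk2 hx0 hxlt, hkR]
      ring
    rw [hcong, intervalIntegral.integral_const_mul]
  -- reindex the sum
  have hfinal : (∑ kk ∈ Finset.range (b - a).toNat,
        ∫ u in ((a:ℝ) + (kk:ℝ))..((a:ℝ) + ((kk:ℝ) + 1)), g u)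
      = ∑ l ∈ Finset.Icc a (b - 1), walsh n (((l:ℝ) + m) / 2 ^ j) *
          ∫ x in (0:ℝ)..1, h (x + l) * walsh (n / 2 ^ j) x := by
    apply Finset.sum_nbij' (i := fun kk : ℕ => a + kk) (j := fun l : ℤ => (l - a).toNat)
    · intro kk hkk
      simp only [Finset.mem_range] at hkk
      simp only [Finset.mem_Icc]
      omega
    · intro l hl
      simp only [Finset.mem_Icc] at hl
      simp only [Finset.mem_range]
      omega
    · intro kk hkk
      omega
    · intro l hl
      simp only [Finset.mem_Icc] at hl
      omega
    · intro kk hkk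
      simp only [Finset.mem_range] at hkk
      have hla : a ≤ a + (kk:ℤ) := by omega
      have hlb : a + (kk:ℤ) ≤ b - 1 := by omega
      rw [show (a:ℝ) + ((kk:ℝ) + 1) = ((a:ℝ) + (kk:ℝ)) + 1 by ring,
        show (a:ℝ) + (kk:ℝ) = ((a + (kk:ℤ) : ℤ) : ℝ) by push_cast; ring]
      exact hper _ hla hlb
  -- put everything together
  have hconst : (2:ℝ) ^ ((j:ℝ)/2) * ((2:ℝ) ^ j)⁻¹ = (2:ℝ) ^ (-(j:ℝ)/2) := by
    rw [← Real.rpow_natCast 2 j, ← Real.rpow_neg (by norm_num), ← Real.rpow_add (by norm_num)]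
    congr 1; ring
  rw [hA, hsplit1, ← hsum, hfinal, smul_eq_mul, ← mul_assoc, hconst]
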